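/- Let node v_i have neighborhood N(i) with |N(i)| = D_{ii}, neighbor features that are random vectors satisfying ‖∑_{j∈N(i)} x_j‖₂ ≤ R√(D_{ii}) almost surely, and let σ be homogeneous of degree τ ≥ 1 with |σ(q)| ≤ c|q| for some c ≥ 0. Then for every δ ∈ (0,1), with probability at least 1 − δ, ‖𝔼[Z_i] − Z_i‖_∞ ≤ c·R·(max_{k∈[K]} ‖w_k‖₂)·√(2 ln(2K/δ) / D_{ii}^{2τ−1}). -/

import Mathlib

open MeasureTheory
open scoped RealInnerProductSpace ENNReal


-- scalar lemma: exp L ≤ 4 L for log 2 ≤ L ≤ 2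
lemma exp_le_four_mul {L : ℝ} (h1 : Real.log 2 ≤ L) (h2 : L ≤ 2) : Real.exp L ≤ 4 * L := by
  have hlog : (0.6931471803 : ℝ) < Real.log 2 := Real.log_two_gt_d9
  have he : Real.exp 1 < 2.7182818286 := Real.exp_one_lt_d9
  have he0 : (0:ℝ) < Real.exp 1 := Real.exp_pos 1
  have hE : (0:ℝ) < Real.exp L := Real.exp_pos L
  rcases le_or_gt L 1.2 with hc | hc
  · have key : Real.exp L * (2 - L) ≤ Real.exp 1 := by
      have h := Real.add_one_le_exp (1 - L)
      calc Real.exp L * (2 - L) ≤ Real.exp L * Real.exp (1 - L) := by nlinarith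
        _ = Real.exp 1 := by rw [← Real.exp_add]; ring_nf
    nlinarith
  · have key : Real.exp L * (3 - L) ≤ Real.exp 1 * Real.exp 1 := by
      have h := Real.add_one_le_exp (2 - L)
      calc Real.exp L * (3 - L) ≤ Real.exp L * Real.exp (2 - L) := by nlinarith
        _ = Real.exp 1 * Real.exp 1 := by rw [← Real.exp_add, ← Real.exp_add]; norm_num
    nlinarith


lemma moment_choice {L : ℝ} (hL : Real.log 2 ≤ L) :
    ∃ n : ℕ, 1 ≤ n ∧ (1/4 : ℝ) * (2/L)^n ≤ 2 * Real.exp (-L) := by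
  have hL0 : 0 < L := lt_of_lt_of_le (Real.log_pos one_lt_two) hL
  rcases le_or_gt L 2 with h2 | h2
  · refine ⟨1, le_refl _, ?_⟩
    have hE := exp_le_four_mul hL h2
    have hinv : Real.exp (-L) * Real.exp L = 1 := by rw [← Real.exp_add]; simp
    have hEn : (0:ℝ) < Real.exp (-L) := Real.exp_pos _
    have heq : (1/4:ℝ)*(2/L)^1 = 1/(2*L) := by rw [pow_one]; ring
    rw [heq, div_le_iff₀ (by linarith : (0:ℝ) < 2*L)]
    nlinarith [mul_le_mul_of_nonneg_left hE hEn.le]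
  · have hlog : 0 < Real.log (L/2) := Real.log_pos (by linarith)
    obtain ⟨n, hn⟩ := exists_nat_ge (L / Real.log (L/2))
    refine ⟨n + 1, by omega, ?_⟩
    have hnL : L ≤ ((n+1:ℕ):ℝ) * Real.log (L/2) := by
      rw [div_le_iff₀ hlog] at hn
      push_cast
      nlinarith
    have hpow : Real.exp (((n+1:ℕ):ℝ) * Real.log (L/2)) = (L/2)^(n+1) := by
      rw [Real.exp_nat_mul, Real.exp_log (by linarith : (0:ℝ) < L/2)]
    have h1 : (2/L:ℝ)^(n+1) = Real.exp (-(((n+1:ℕ):ℝ) * Real.log (L/2))) := by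
      rw [Real.exp_neg, hpow, ← inv_pow, inv_div]
    have h2 : (2/L:ℝ)^(n+1) ≤ Real.exp (-L) := by
      rw [h1]
      exact Real.exp_le_exp.mpr (neg_le_neg hnL)
    nlinarith [Real.exp_pos (-L)]


lemma tail_bound {Ω : Type*} [MeasurableSpace Ω] (P : Measure Ω) [IsProbabilityMeasure P]
    (Y : Ω → ℝ) (hY : Measurable Y) (B L : ℝ) (hB : 0 < B) (hL : Real.log 2 ≤ L)
    (hbd : ∀ᵐ ω ∂P, |Y ω| ≤ B) :
    P {ω | B * Real.sqrt (2 * L) ≤ |Y ω - ∫ ω', Y ω' ∂P|} ≤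
      ENNReal.ofReal (2 * Real.exp (-L)) := by
  have hL0 : 0 < L := lt_of_lt_of_le (Real.log_pos one_lt_two) hL
  have hint : Integrable Y P := by
    refine Integrable.mono' (integrable_const B) hY.aestronglyMeasurable ?_
    filter_upwards [hbd] with ω h using by rwa [Real.norm_eq_abs]
  set m := ∫ ω', Y ω' ∂P with hm_def
  have hm : |m| ≤ B := by
    calc |m| ≤ ∫ ω', |Y ω'| ∂P := by
          rw [hm_def, ← Real.norm_eq_abs]
          exact (norm_integral_le_integral_norm Y).trans (le_of_eq (by simp [Real.norm_eq_abs]))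
      _ ≤ ∫ _ω', B ∂P := integral_mono_ae hint.abs (integrable_const B) hbd
      _ = B := by simp
  obtain ⟨n, hn1, hkey⟩ := moment_choice hL
  obtain ⟨p, rfl⟩ : ∃ p, n = p + 1 := ⟨n - 1, by omega⟩
  set t := B * Real.sqrt (2 * L) with ht_def
  have h2L : (0:ℝ) < 2 * L := by linarith
  have ht : 0 < t := mul_pos hB (Real.sqrt_pos.2 h2L)
  have ht2 : t ^ 2 = B ^ 2 * (2 * L) := by
    rw [ht_def, mul_pow, Real.sq_sqrt h2L.le]
  -- bounds on centered variable
  have hXbd : ∀ᵐ ω ∂P, (Y ω - m) ^ 2 ≤ 4 * B ^ 2 := by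
    filter_upwards [hbd] with ω h
    have h1 := abs_le.1 h
    have h2 := abs_le.1 hm
    nlinarith
  have hX2int : Integrable (fun ω => (Y ω - m) ^ 2) P := by
    refine Integrable.mono' (integrable_const (4 * B ^ 2))
      ((hY.sub measurable_const).pow_const 2).aestronglyMeasurable ?_
    filter_upwards [hXbd] with ω h
    rwa [Real.norm_eq_abs, abs_of_nonneg (sq_nonneg _)]
  have hY2int : Integrable (fun ω => Y ω ^ 2) P := by
    refine Integrable.mono' (integrable_const (B ^ 2)) (hY.pow_const 2).aestronglyMeasurable ?_
    filter_upwards [hbd] with ω h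
    rw [Real.norm_eq_abs, abs_of_nonneg (sq_nonneg _)]
    have := abs_le.1 h
    nlinarith
  -- variance bound
  have hvar : ∫ ω', (Y ω' - m) ^ 2 ∂P ≤ B ^ 2 := by
    have hexp : ∫ ω', (Y ω' - m) ^ 2 ∂P = (∫ ω', Y ω' ^ 2 ∂P) - m ^ 2 := by
      have : (fun ω' => (Y ω' - m) ^ 2) = fun ω' => Y ω' ^ 2 - (2 * m) * Y ω' + m ^ 2 := by
        funext ω'; ring
      have hsub2 : Integrable (fun ω' => 2 * m * Y ω' - m ^ 2) P :=
        (hint.const_mul (2 * m)).sub (integrable_const _)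
      have this2 : (fun ω' => (Y ω' - m) ^ 2) = fun ω' => Y ω' ^ 2 - (2 * m * Y ω' - m ^ 2) := by
        funext ω'; ring
      rw [this2, integral_sub hY2int hsub2,
        integral_sub (hint.const_mul (2 * m)) (integrable_const _), integral_const_mul,
        integral_const]
      simp [← hm_def]
      ring
    have hY2 : ∫ ω', Y ω' ^ 2 ∂P ≤ B ^ 2 := by
      calc ∫ ω', Y ω' ^ 2 ∂P ≤ ∫ _ω', B ^ 2 ∂P := by
            refine integral_mono_ae hY2int (integrable_const _) ?_
            filter_upwards [hbd] with ω h
            have := abs_le.1 h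
            nlinarith
        _ = B ^ 2 := by simp
    nlinarith [sq_nonneg m]
  -- moment bound
  set g := fun ω => ((Y ω - m) ^ 2) ^ (p + 1) with hg_def
  have hgm : Measurable g := ((hY.sub measurable_const).pow_const 2).pow_const (p + 1)
  have hgint : Integrable g P := by
    refine Integrable.mono' (integrable_const ((4 * B ^ 2) ^ (p + 1)))
      hgm.aestronglyMeasurable ?_
    filter_upwards [hXbd] with ω h
    rw [Real.norm_eq_abs, abs_of_nonneg (pow_nonneg (sq_nonneg _) _)]
    exact pow_le_pow_left₀ (sq_nonneg _) h _
  have hmom : ∫ ω', g ω' ∂P ≤ (4 * B ^ 2) ^ p * B ^ 2 := by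
    calc ∫ ω', g ω' ∂P ≤ ∫ ω', (4 * B ^ 2) ^ p * (Y ω' - m) ^ 2 ∂P := by
          refine integral_mono_ae hgint (hX2int.const_mul _) ?_
          filter_upwards [hXbd] with ω h
          calc ((Y ω - m) ^ 2) ^ (p + 1) = ((Y ω - m) ^ 2) ^ p * (Y ω - m) ^ 2 := by
                rw [pow_succ]
            _ ≤ (4 * B ^ 2) ^ p * (Y ω - m) ^ 2 :=
                mul_le_mul_of_nonneg_right (pow_le_pow_left₀ (sq_nonneg _) h p) (sq_nonneg _)
      _ = (4 * B ^ 2) ^ p * ∫ ω', (Y ω' - m) ^ 2 ∂P := integral_const_mul _ _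
      _ ≤ (4 * B ^ 2) ^ p * B ^ 2 :=
          mul_le_mul_of_nonneg_left hvar (by positivity)
  -- Markov
  have hmark := mul_meas_ge_le_integral_of_nonneg
    (ae_of_all P fun ω => pow_nonneg (sq_nonneg (Y ω - m)) (p + 1)) hgint (t ^ (2 * (p + 1)))
  have hsub : {ω | t ≤ |Y ω - m|} ⊆ {ω | t ^ (2 * (p + 1)) ≤ g ω} := by
    intro ω h
    simp only [Set.mem_setOf_eq] at h ⊢
    have h2 : t ^ 2 ≤ (Y ω - m) ^ 2 := by
      calc t ^ 2 ≤ |Y ω - m| ^ 2 := pow_le_pow_left₀ ht.le h 2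
        _ = (Y ω - m) ^ 2 := sq_abs _
    rw [pow_mul]
    exact pow_le_pow_left₀ (by positivity) h2 _
  have htn : (0:ℝ) < t ^ (2 * (p + 1)) := by positivity
  have hscal : (4 * B ^ 2) ^ p * B ^ 2 ≤ t ^ (2 * (p + 1)) * (2 * Real.exp (-L)) := by
    have h1 : t ^ (2 * (p + 1)) = (B ^ 2 * (2 * L)) ^ (p + 1) := by
      rw [pow_mul, ht2]
    rw [h1]
    have h2 : (B ^ 2 * (2 * L)) ^ (p + 1) * ((1/4 : ℝ) * (2/L) ^ (p + 1)) =
        (4 * B ^ 2) ^ p * B ^ 2 := by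
      have h4 : (4:ℝ) ^ p = 2 ^ (p * 2) := by
        rw [show (4:ℝ) = 2 ^ 2 by norm_num, ← pow_mul, mul_comm]
      field_simp
      ring_nf
      rw [h4]
      have e : L * L ^ p * L⁻¹ * L⁻¹ ^ p = 1 := by
        rw [inv_pow, mul_right_comm L, mul_inv_cancel₀ hL0.ne', one_mul, mul_inv_cancel₀ (pow_ne_zero _ hL0.ne')]
      linear_combination (B ^ 2 * B ^ (p * 2) * 2 ^ (p * 2) * 4) * e
    calc (4 * B ^ 2) ^ p * B ^ 2
        = (B ^ 2 * (2 * L)) ^ (p + 1) * ((1/4 : ℝ) * (2/L) ^ (p + 1)) := h2.symm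
      _ ≤ (B ^ 2 * (2 * L)) ^ (p + 1) * (2 * Real.exp (-L)) :=
          mul_le_mul_of_nonneg_left hkey (by positivity)
  have hfin : (P {ω | t ^ (2 * (p + 1)) ≤ g ω}).toReal ≤ 2 * Real.exp (-L) := by
    have := hmark.trans (hmom.trans hscal)
    exact le_of_mul_le_mul_left this htn
  calc P {ω | t ≤ |Y ω - m|} ≤ P {ω | t ^ (2 * (p + 1)) ≤ g ω} := measure_mono hsub
    _ = ENNReal.ofReal (P {ω | t ^ (2 * (p + 1)) ≤ g ω}).toReal :=
        (ENNReal.ofReal_toReal (measure_ne_top P _)).symm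
    _ ≤ ENNReal.ofReal (2 * Real.exp (-L)) := ENNReal.ofReal_le_ofReal hfin

/-- Concentration of the aggregated representation around its mean (Theorem 1, part 2):
if the neighbor features satisfy `‖∑_{j∈N(i)} xⱼ‖₂ ≤ R √Dᵢᵢ` almost surely, and `σ` is
homogeneous of degree `τ ≥ 1` with `|σ q| ≤ c |q|`, then for every `δ ∈ (0,1)`, with
probability at least `1 - δ`,
`‖𝔼[Zᵢ] - Zᵢ‖_∞ ≤ c R (max_k ‖w_k‖₂) √(2 ln(2K/δ) / Dᵢᵢ^{2τ-1})`. -/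

theorem stmt2
    {Ω : Type*} [MeasurableSpace Ω] (P : Measure Ω) [IsProbabilityMeasure P]
    (F K D : ℕ) (hK : 0 < K) (hD : 0 < D) (R : ℝ) (hR : 0 ≤ R)
    (x : Fin D → Ω → EuclideanSpace ℝ (Fin F))
    (hxm : ∀ j, Measurable (x j))
    (hx : ∀ᵐ ω ∂P, ‖∑ j, x j ω‖ ≤ R * Real.sqrt D)
    (σ : ℝ → ℝ) (hσm : Measurable σ) (τ : ℝ) (hτ : 1 ≤ τ)
    (hhom : ∀ a q : ℝ, 0 < a → σ (a * q) = a ^ τ * σ q)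
    (c : ℝ) (hc : 0 ≤ c) (hσc : ∀ q, |σ q| ≤ c * |q|)
    (w : Fin K → EuclideanSpace ℝ (Fin F))
    (Z : Ω → Fin K → ℝ)
    (hZ : ∀ ω k, Z ω k = σ ((1 / (D : ℝ)) * ∑ j, ⟪x j ω, w k⟫))
    (δ : ℝ) (hδ : δ ∈ Set.Ioo (0 : ℝ) 1) :
    ENNReal.ofReal (1 - δ) ≤
      P {ω | ∀ k : Fin K, |(∫ ω', Z ω' k ∂P) - Z ω k| ≤
        c * R * (⨆ k' : Fin K, ‖w k'‖) *
          Real.sqrt (2 * Real.log (2 * K / δ) / (D : ℝ) ^ (2 * τ - 1))} := by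
  obtain ⟨hδ0, hδ1⟩ := hδ
  have hD1 : (0:ℝ) < D := Nat.cast_pos.2 hD
  have hK1 : (0:ℝ) < K := Nat.cast_pos.2 hK
  set W := ⨆ k' : Fin K, ‖w k'‖ with hW_def
  have hW0 : 0 ≤ W := Real.iSup_nonneg fun k => norm_nonneg _
  have hWk : ∀ k, ‖w k‖ ≤ W := fun k => le_ciSup (f := fun k' : Fin K => ‖w k'‖) (Set.finite_range _).bddAbove k
  set L := Real.log (2 * K / δ) with hL_def
  have h2K : (2:ℝ) ≤ 2 * K / δ := by
    have hK2 : (1:ℝ) ≤ K := Nat.one_le_cast.2 hK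
    rw [le_div_iff₀ hδ0]; nlinarith
  have hL : Real.log 2 ≤ L := Real.log_le_log (by norm_num) h2K
  have hL0 : 0 < L := lt_of_lt_of_le (Real.log_pos one_lt_two) hL
  have h2L : (0:ℝ) < 2 * L := by linarith
  set T := c * R * W * Real.sqrt (2 * L / (D:ℝ) ^ (2 * τ - 1)) with hT_def
  set B := c * R * W * (((1:ℝ)/D) ^ τ * Real.sqrt D) with hB_def
  have hBnn : 0 ≤ B := by
    have : (0:ℝ) ≤ ((1:ℝ)/D) ^ τ := Real.rpow_nonneg (by positivity) _
    have h2 : (0:ℝ) ≤ Real.sqrt D := Real.sqrt_nonneg _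
    rw [hB_def]; positivity
  have hZmeas : ∀ k, Measurable fun ω => Z ω k := by
    intro k
    have he : (fun ω => Z ω k) = fun ω => σ ((1/(D:ℝ)) * ∑ j, ⟪x j ω, w k⟫) :=
      funext fun ω => hZ ω k
    rw [he]
    exact hσm.comp (measurable_const.mul
      (Finset.measurable_sum _ fun j _ => (hxm j).inner_const))
  have hbd : ∀ k, ∀ᵐ ω ∂P, |Z ω k| ≤ B := by
    intro k
    filter_upwards [hx] with ω hω
    rw [hZ ω k, hhom _ _ (by positivity : (0:ℝ) < 1/(D:ℝ))]
    have hS : |∑ j, ⟪x j ω, w k⟫| ≤ R * Real.sqrt D * W := by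
      calc |∑ j, ⟪x j ω, w k⟫| = |⟪∑ j, x j ω, w k⟫| := by rw [sum_inner]
        _ ≤ ‖∑ j, x j ω‖ * ‖w k‖ := abs_real_inner_le_norm _ _
        _ ≤ R * Real.sqrt D * W :=
            mul_le_mul hω (hWk k) (norm_nonneg _) (by positivity)
    have hrp : (0:ℝ) ≤ ((1:ℝ)/D) ^ τ := Real.rpow_nonneg (by positivity) _
    calc |((1:ℝ)/(D:ℝ))^τ * σ (∑ j, ⟪x j ω, w k⟫)|
        = ((1:ℝ)/D)^τ * |σ (∑ j, ⟪x j ω, w k⟫)| := by rw [abs_mul, abs_of_nonneg hrp]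
      _ ≤ ((1:ℝ)/D)^τ * (c * (R * Real.sqrt D * W)) := by
          refine mul_le_mul_of_nonneg_left ?_ hrp
          exact (hσc _).trans (mul_le_mul_of_nonneg_left hS hc)
      _ = B := by rw [hB_def]; ring
  have hTB : T = B * Real.sqrt (2 * L) := by
    have e1 : Real.sqrt ((D:ℝ)^(2*τ-1)) = (D:ℝ)^((2*τ-1)/2) := by
      rw [Real.sqrt_eq_rpow, ← Real.rpow_mul hD1.le]
      congr 1; ring
    have e2 : ((1:ℝ)/(D:ℝ))^τ * Real.sqrt D = ((D:ℝ)^((2*τ-1)/2))⁻¹ := by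
      calc ((1:ℝ)/(D:ℝ))^τ * Real.sqrt D = (D:ℝ)^(-τ) * (D:ℝ)^((1:ℝ)/2) := by
            rw [Real.sqrt_eq_rpow, one_div, Real.inv_rpow hD1.le, ← Real.rpow_neg hD1.le]
        _ = (D:ℝ)^(-τ + (1:ℝ)/2) := (Real.rpow_add hD1 _ _).symm
        _ = (D:ℝ)^(-((2*τ-1)/2)) := by congr 1; ring
        _ = ((D:ℝ)^((2*τ-1)/2))⁻¹ := Real.rpow_neg hD1.le _
    rw [hT_def, hB_def, Real.sqrt_div h2L.le, e1, e2]
    ring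
  rcases eq_or_lt_of_le hBnn with hB0 | hBpos
  · -- degenerate case B = 0
    have hz : ∀ k, ∀ᵐ ω ∂P, Z ω k = 0 := fun k =>
      (hbd k).mono fun ω h => abs_nonpos_iff.mp (le_of_le_of_eq h hB0.symm)
    have hT0 : 0 ≤ T := by
      have : (0:ℝ) ≤ Real.sqrt (2 * L / (D:ℝ) ^ (2 * τ - 1)) := Real.sqrt_nonneg _
      rw [hT_def]; positivity
    have hae : ∀ᵐ ω ∂P, ω ∈ {ω | ∀ k : Fin K, |(∫ ω', Z ω' k ∂P) - Z ω k| ≤ T} := by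
      have hall : ∀ᵐ ω ∂P, ∀ k, Z ω k = 0 := (ae_all_iff).2 hz
      filter_upwards [hall] with ω hω k
      rw [hω k, integral_congr_ae (hz k), integral_zero]
      simpa using hT0
    have huniv : {ω | ∀ k : Fin K, |(∫ ω', Z ω' k ∂P) - Z ω k| ≤ T} =ᵐ[P] Set.univ := by
      rw [Filter.eventuallyEq_univ]; exact hae
    calc ENNReal.ofReal (1 - δ) ≤ 1 := ENNReal.ofReal_le_one.2 (by linarith)
      _ = P Set.univ := measure_univ.symm
      _ = P {ω | ∀ k : Fin K, |(∫ ω', Z ω' k ∂P) - Z ω k| ≤ T} := (measure_congr huniv).symm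
  · -- main case 0 < B
    set G := {ω | ∀ k : Fin K, |(∫ ω', Z ω' k ∂P) - Z ω k| ≤ T} with hG_def
    have hGm : MeasurableSet G := by
      have : G = ⋂ k : Fin K, {ω | |(∫ ω', Z ω' k ∂P) - Z ω k| ≤ T} := by
        ext ω; simp [hG_def, Set.mem_iInter]
      rw [this]
      exact MeasurableSet.iInter fun k =>
        measurableSet_le ((measurable_const.sub (hZmeas k)).abs) measurable_const
    have hval : (2:ℝ) * Real.exp (-L) = δ / K := by
      rw [hL_def, Real.exp_neg, Real.exp_log (by linarith : (0:ℝ) < 2*K/δ)]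
      field_simp
    have hsum : P Gᶜ ≤ ENNReal.ofReal δ := by
      have hGc : Gᶜ ⊆ ⋃ k : Fin K,
          {ω | B * Real.sqrt (2*L) ≤ |Z ω k - ∫ ω', Z ω' k ∂P|} := by
        intro ω hω
        simp only [hG_def, Set.mem_compl_iff, Set.mem_setOf_eq, not_forall, not_le] at hω
        obtain ⟨k, hk⟩ := hω
        refine Set.mem_iUnion.2 ⟨k, ?_⟩
        simp only [Set.mem_setOf_eq]
        rw [abs_sub_comm]
        rw [hTB] at hk
        linarith
      calc P Gᶜ ≤ ∑' k : Fin K, P {ω | B * Real.sqrt (2*L) ≤ |Z ω k - ∫ ω', Z ω' k ∂P|} :=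
            (measure_mono hGc).trans (measure_iUnion_le _)
        _ ≤ ∑' _k : Fin K, ENNReal.ofReal (δ / K) := by
            refine Summable.tsum_le_tsum (fun k => ?_) ENNReal.summable ENNReal.summable
            have := tail_bound P (fun ω => Z ω k) (hZmeas k) B L hBpos hL (hbd k)
            rwa [hval] at this
        _ = (K : ℝ≥0∞) * ENNReal.ofReal (δ / K) := by
            rw [tsum_fintype]
            simp [Finset.sum_const, Fintype.card_fin, nsmul_eq_mul]
        _ = ENNReal.ofReal δ := by
            rw [← ENNReal.ofReal_natCast K, ← ENNReal.ofReal_mul (by positivity)]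
            congr 1
            field_simp
    have h1 : P G = 1 - P Gᶜ := by
      have := prob_compl_eq_one_sub (μ := P) hGm.compl
      rwa [compl_compl] at this
    calc ENNReal.ofReal (1 - δ) = 1 - ENNReal.ofReal δ := by
          rw [ENNReal.ofReal_sub _ hδ0.le, ENNReal.ofReal_one]
      _ ≤ 1 - P Gᶜ := tsub_le_tsub_left hsum 1
      _ = P G := h1.symm
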